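/- Let $u : (0,\infty) \to (0,\infty)$ be non-increasing with $\phi(x) = x u(x)$ non-decreasing. Fix vectors $x_1, \dots, x_n \in \mathbb{R}^p$ and define, for $d = (d_1,\dots,d_n)$ with all $d_i > 0$, $h_j(d) = \frac{1}{p} x_j^\top \left( \frac{1}{n} \sum_{i=1}^n u(d_i) x_i x_i^\top \right)^{-1} x_j$ (assuming the matrix is invertible). If $d$ is a fixed point of $h$ and $S = \frac{1}{n}\sum_i x_i x_i^\top$ is invertible, then for every $j$, $\frac{1}{p} x_{j_{\min}}^\top S^{-1} x_{j_{\min}} \le \phi(d_j) \le \frac{1}{p} x_{j_{\max}}^\top S^{-1} x_{j_{\max}}$, where $j_{\min}$ and $j_{\max}$ are indices minimizing and maximizing $d_j$ respectively. -/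

import Mathlib

open Matrix

/-- Sample covariance matrix `S = (1/n) ∑ xᵢ xᵢᵀ`. -/
noncomputable def sampleCov {n p : ℕ} (x : Fin n → Fin p → ℝ) : Matrix (Fin p) (Fin p) ℝ :=
  (n : ℝ)⁻¹ • ∑ j, vecMulVec (x j) (x j)

/-- Weighted sample covariance `(1/n) ∑ u(dᵢ) xᵢ xᵢᵀ`. -/
noncomputable def weightedCov {n p : ℕ} (x : Fin n → Fin p → ℝ) (u : ℝ → ℝ)
    (d : Fin n → ℝ) : Matrix (Fin p) (Fin p) ℝ :=
  (n : ℝ)⁻¹ • ∑ i, u (d i) • vecMulVec (x i) (x i)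

section Aux

variable {p : ℕ}

lemma sum_mulVec' {n : ℕ} (M : Fin n → Matrix (Fin p) (Fin p) ℝ) (z : Fin p → ℝ) :
    (∑ i, M i) *ᵥ z = ∑ i, M i *ᵥ z := by
  funext i
  simp [mulVec, dotProduct, Matrix.sum_apply, Finset.sum_mul]
  rw [Finset.sum_comm]

lemma dot_sum {n : ℕ} (z : Fin p → ℝ) (f : Fin n → Fin p → ℝ) :
    z ⬝ᵥ (∑ i, f i) = ∑ i, z ⬝ᵥ f i := by
  simp [dotProduct, Finset.sum_apply, Finset.mul_sum]
  rw [Finset.sum_comm]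

lemma vecMulVec_mulVec' (a b z : Fin p → ℝ) :
    vecMulVec a b *ᵥ z = (b ⬝ᵥ z) • a := by
  funext i
  simp [vecMulVec_apply, mulVec, dotProduct, Finset.mul_sum, mul_comm, mul_left_comm]

lemma quad_sampleCov {n : ℕ} (x : Fin n → Fin p → ℝ) (z : Fin p → ℝ) :
    z ⬝ᵥ (sampleCov x *ᵥ z) = (n : ℝ)⁻¹ * ∑ i, (x i ⬝ᵥ z) ^ 2 := by
  rw [sampleCov, smul_mulVec, sum_mulVec', dotProduct_smul, smul_eq_mul]
  congr 1
  rw [dot_sum]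
  refine Finset.sum_congr rfl fun i _ => ?_
  rw [vecMulVec_mulVec', dotProduct_smul, smul_eq_mul, dotProduct_comm, sq]

lemma quad_weightedCov {n : ℕ} (x : Fin n → Fin p → ℝ) (u : ℝ → ℝ) (d : Fin n → ℝ)
    (z : Fin p → ℝ) :
    z ⬝ᵥ (weightedCov x u d *ᵥ z) = (n : ℝ)⁻¹ * ∑ i, u (d i) * (x i ⬝ᵥ z) ^ 2 := by
  rw [weightedCov, smul_mulVec, sum_mulVec', dotProduct_smul, smul_eq_mul]
  congr 1
  rw [dot_sum]
  refine Finset.sum_congr rfl fun i _ => ?_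
  simp only [smul_mulVec, vecMulVec_mulVec', dotProduct_smul, smul_dotProduct,
    smul_eq_mul, dotProduct_comm z]
  ring

lemma vecMulVec_self_transpose (a : Fin p → ℝ) :
    (vecMulVec a a)ᵀ = vecMulVec a a := by
  ext i j
  simp [vecMulVec_apply, mul_comm]

lemma sampleCov_transpose {n : ℕ} (x : Fin n → Fin p → ℝ) :
    (sampleCov x)ᵀ = sampleCov x := by
  rw [sampleCov, transpose_smul, transpose_sum]
  simp [vecMulVec_self_transpose]

lemma weightedCov_transpose {n : ℕ} (x : Fin n → Fin p → ℝ) (u : ℝ → ℝ) (d : Fin n → ℝ) :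
    (weightedCov x u d)ᵀ = weightedCov x u d := by
  rw [weightedCov, transpose_smul, transpose_sum]
  simp [transpose_smul, vecMulVec_self_transpose]

/-- Key lemma: the quadratic form of the inverse is antitone. -/
lemma inv_quad_antitone (A B : Matrix (Fin p) (Fin p) ℝ)
    (hA : IsUnit A.det) (hB : IsUnit B.det) (hBsym : Bᵀ = B)
    (hBpsd : ∀ z, 0 ≤ z ⬝ᵥ (B *ᵥ z))
    (hle : ∀ z, z ⬝ᵥ (B *ᵥ z) ≤ z ⬝ᵥ (A *ᵥ z)) (v : Fin p → ℝ) :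
    v ⬝ᵥ (A⁻¹ *ᵥ v) ≤ v ⬝ᵥ (B⁻¹ *ᵥ v) := by
  set y := A⁻¹ *ᵥ v with hy
  set w := B⁻¹ *ᵥ v with hw
  have hAy : A *ᵥ y = v := by
    rw [hy, mulVec_mulVec, Matrix.mul_nonsing_inv A hA, one_mulVec]
  have hBw : B *ᵥ w = v := by
    rw [hw, mulVec_mulVec, Matrix.mul_nonsing_inv B hB, one_mulVec]
  -- completing the square with B
  have hsq : 0 ≤ (y - w) ⬝ᵥ (B *ᵥ (y - w)) := hBpsd _
  have hdot : ∀ z₁ z₂ : Fin p → ℝ, z₁ ⬝ᵥ (B *ᵥ z₂) = z₂ ⬝ᵥ (B *ᵥ z₁) := by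
    intro z₁ z₂
    rw [dotProduct_mulVec, ← vecMul_transpose, hBsym, dotProduct_comm]
  have expand : (y - w) ⬝ᵥ (B *ᵥ (y - w))
      = y ⬝ᵥ (B *ᵥ y) - y ⬝ᵥ v - v ⬝ᵥ y + v ⬝ᵥ w := by
    have h1 : y ⬝ᵥ (B *ᵥ w) = y ⬝ᵥ v := by rw [hBw]
    have h2 : w ⬝ᵥ (B *ᵥ y) = v ⬝ᵥ y := by rw [hdot, hBw, dotProduct_comm]
    have h3 : w ⬝ᵥ (B *ᵥ w) = v ⬝ᵥ w := by rw [hBw, dotProduct_comm]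
    rw [mulVec_sub, dotProduct_sub, sub_dotProduct, sub_dotProduct, h1, h2, h3]
    ring
  have hyAy : y ⬝ᵥ (A *ᵥ y) = y ⬝ᵥ v := by rw [hAy]
  have hvy : v ⬝ᵥ y = y ⬝ᵥ v := dotProduct_comm _ _
  have hBy := hle y
  nlinarith [hsq, expand, hyAy, hvy, hBy]

end Aux

theorem stmt4 {n p : ℕ} (hn : 0 < n) (hp : 0 < p)
    (u : ℝ → ℝ) (hu_pos : ∀ y > 0, 0 < u y) (hu_anti : AntitoneOn u (Set.Ioi 0))
    (hφ_mono : MonotoneOn (fun y => y * u y) (Set.Ioi 0))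
    (x : Fin n → Fin p → ℝ) (d : Fin n → ℝ) (hd : ∀ i, 0 < d i)
    (hS : IsUnit (sampleCov x).det)
    (hinv : ∀ e : Fin n → ℝ, (∀ i, 0 < e i) → IsUnit (weightedCov x u e).det)
    (hfix : ∀ j, (p : ℝ)⁻¹ * (x j ⬝ᵥ ((weightedCov x u d)⁻¹ *ᵥ x j)) = d j)
    (jmin jmax : Fin n) (hjmin : ∀ j, d jmin ≤ d j) (hjmax : ∀ j, d j ≤ d jmax) :
    ∀ j,
      (p : ℝ)⁻¹ * (x jmin ⬝ᵥ ((sampleCov x)⁻¹ *ᵥ x jmin)) ≤ d j * u (d j) ∧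
      d j * u (d j) ≤ (p : ℝ)⁻¹ * (x jmax ⬝ᵥ ((sampleCov x)⁻¹ *ᵥ x jmax)) := by
  intro j
  set S := sampleCov x with hSdef
  set W := weightedCov x u d with hWdef
  have hWdet : IsUnit W.det := hinv d hd
  have hn' : (0:ℝ) < (n:ℝ)⁻¹ := by positivity
  have hp' : (0:ℝ) < (p:ℝ)⁻¹ := by positivity
  have humax : 0 < u (d jmax) := hu_pos _ (hd _)
  have humin : 0 < u (d jmin) := hu_pos _ (hd _)
  -- positive semidefiniteness facts
  have hSpsd : ∀ z, 0 ≤ z ⬝ᵥ (S *ᵥ z) := by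
    intro z; rw [hSdef, quad_sampleCov]; positivity
  have hWpsd : ∀ z, 0 ≤ z ⬝ᵥ (W *ᵥ z) := by
    intro z; rw [hWdef, quad_weightedCov]
    have h0 : ∀ i ∈ Finset.univ, 0 ≤ u (d i) * (x i ⬝ᵥ z) ^ 2 := fun i _ =>
      mul_nonneg (hu_pos _ (hd i)).le (sq_nonneg _)
    exact mul_nonneg hn'.le (Finset.sum_nonneg h0)
  -- scalar multiples of S
  have smul_det : ∀ c : ℝ, c ≠ 0 → IsUnit (c • S).det := by
    intro c hc
    rw [Matrix.det_smul]
    exact (IsUnit.pow _ (isUnit_iff_ne_zero.2 hc)).mul hS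
  have smul_quad : ∀ (c : ℝ) (z : Fin p → ℝ), z ⬝ᵥ ((c • S) *ᵥ z) = c * (z ⬝ᵥ (S *ᵥ z)) := by
    intro c z
    rw [smul_mulVec, dotProduct_smul, smul_eq_mul]
  have smul_inv_quad : ∀ (c : ℝ), c ≠ 0 → ∀ v : Fin p → ℝ,
      v ⬝ᵥ ((c • S)⁻¹ *ᵥ v) = c⁻¹ * (v ⬝ᵥ (S⁻¹ *ᵥ v)) := by
    intro c hc v
    have hinvS : (c • S)⁻¹ = c⁻¹ • S⁻¹ := by
      apply Matrix.inv_eq_right_inv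
      rw [Matrix.smul_mul, Matrix.mul_smul, Matrix.mul_nonsing_inv S hS, smul_smul,
        mul_inv_cancel₀ hc, one_smul]
    rw [hinvS, smul_mulVec, dotProduct_smul, smul_eq_mul]
  have smul_sym : ∀ c : ℝ, ((c • S)ᵀ = c • S) := by
    intro c; rw [transpose_smul, hSdef, sampleCov_transpose]
  -- Upper bound: u(d jmax) • S ≤ W
  have hle_max : ∀ z, z ⬝ᵥ ((u (d jmax) • S) *ᵥ z) ≤ z ⬝ᵥ (W *ᵥ z) := by
    intro z
    rw [smul_quad, hSdef, quad_sampleCov, hWdef, quad_weightedCov]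
    have hterm : ∀ i ∈ Finset.univ, u (d jmax) * (x i ⬝ᵥ z) ^ 2 ≤ u (d i) * (x i ⬝ᵥ z) ^ 2 :=
      fun i _ => mul_le_mul_of_nonneg_right (hu_anti (hd i) (hd jmax) (hjmax i)) (sq_nonneg _)
    calc u (d jmax) * ((n:ℝ)⁻¹ * ∑ i, (x i ⬝ᵥ z) ^ 2)
        = (n:ℝ)⁻¹ * ∑ i, u (d jmax) * (x i ⬝ᵥ z) ^ 2 := by
          simp only [Finset.mul_sum]
          exact Finset.sum_congr rfl fun i _ => by ring
      _ ≤ (n:ℝ)⁻¹ * ∑ i, u (d i) * (x i ⬝ᵥ z) ^ 2 :=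
          mul_le_mul_of_nonneg_left (Finset.sum_le_sum hterm) hn'.le
  have hub := inv_quad_antitone W (u (d jmax) • S) hWdet
    (smul_det _ humax.ne') (smul_sym _)
    (fun z => by rw [smul_quad]; exact mul_nonneg humax.le (hSpsd z)) hle_max (x jmax)
  rw [smul_inv_quad _ humax.ne'] at hub
  -- Lower bound: W ≤ u(d jmin) • S
  have hle_min : ∀ z, z ⬝ᵥ (W *ᵥ z) ≤ z ⬝ᵥ ((u (d jmin) • S) *ᵥ z) := by
    intro z
    rw [smul_quad, hSdef, quad_sampleCov, hWdef, quad_weightedCov]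
    have hterm : ∀ i ∈ Finset.univ, u (d i) * (x i ⬝ᵥ z) ^ 2 ≤ u (d jmin) * (x i ⬝ᵥ z) ^ 2 :=
      fun i _ => mul_le_mul_of_nonneg_right (hu_anti (hd jmin) (hd i) (hjmin i)) (sq_nonneg _)
    calc (n:ℝ)⁻¹ * ∑ i, u (d i) * (x i ⬝ᵥ z) ^ 2
        ≤ (n:ℝ)⁻¹ * ∑ i, u (d jmin) * (x i ⬝ᵥ z) ^ 2 :=
          mul_le_mul_of_nonneg_left (Finset.sum_le_sum hterm) hn'.le
      _ = u (d jmin) * ((n:ℝ)⁻¹ * ∑ i, (x i ⬝ᵥ z) ^ 2) := by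
          simp only [Finset.mul_sum]
          exact Finset.sum_congr rfl fun i _ => by ring
  have hlb := inv_quad_antitone (u (d jmin) • S) W (smul_det _ humin.ne') hWdet
    (hWdef ▸ weightedCov_transpose x u d) hWpsd hle_min (x jmin)
  rw [smul_inv_quad _ humin.ne'] at hlb
  -- assemble
  have hφj : d jmin * u (d jmin) ≤ d j * u (d j) :=
    hφ_mono (hd jmin) (hd j) (hjmin j)
  have hφj' : d j * u (d j) ≤ d jmax * u (d jmax) :=
    hφ_mono (hd j) (hd jmax) (hjmax j)
  have hmin := hfix jmin
  have hmax := hfix jmax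
  constructor
  · have h2 : (p:ℝ)⁻¹ * ((u (d jmin))⁻¹ * (x jmin ⬝ᵥ (S⁻¹ *ᵥ x jmin))) ≤ d jmin := by
      have := mul_le_mul_of_nonneg_left hlb hp'.le
      rw [hmin] at this
      exact this
    have h3 := mul_le_mul_of_nonneg_left h2 humin.le
    have h4 : u (d jmin) * ((p:ℝ)⁻¹ * ((u (d jmin))⁻¹ * (x jmin ⬝ᵥ (S⁻¹ *ᵥ x jmin))))
        = (p:ℝ)⁻¹ * (x jmin ⬝ᵥ (S⁻¹ *ᵥ x jmin)) := by
      field_simp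
    rw [h4] at h3
    calc (p:ℝ)⁻¹ * (x jmin ⬝ᵥ (S⁻¹ *ᵥ x jmin)) ≤ u (d jmin) * d jmin := h3
      _ = d jmin * u (d jmin) := mul_comm _ _
      _ ≤ d j * u (d j) := hφj
  · have h2 : d jmax ≤ (p:ℝ)⁻¹ * ((u (d jmax))⁻¹ * (x jmax ⬝ᵥ (S⁻¹ *ᵥ x jmax))) := by
      have := mul_le_mul_of_nonneg_left hub hp'.le
      rw [hmax] at this
      exact this
    have h3 := mul_le_mul_of_nonneg_left h2 humax.le
    have h4 : u (d jmax) * ((p:ℝ)⁻¹ * ((u (d jmax))⁻¹ * (x jmax ⬝ᵥ (S⁻¹ *ᵥ x jmax))))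
        = (p:ℝ)⁻¹ * (x jmax ⬝ᵥ (S⁻¹ *ᵥ x jmax)) := by
      field_simp
    rw [h4] at h3
    calc d j * u (d j) ≤ d jmax * u (d jmax) := hφj'
      _ = u (d jmax) * d jmax := mul_comm _ _
      _ ≤ _ := h3
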